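/- Let G be a group acting faithfully by order preserving permutations on a totally ordered set X. Then G is left orderable. Moreover, for any subset Y₀ of X, the pointwise stabilizer Stab_G(Y₀) is a left-relatively convex subgroup of G. -/

import Mathlib

/-- `r` is a left-invariant linear order on the group `G`. -/
def IsLeftOrder {G : Type*} [Group G] (r : G → G → Prop) : Prop :=
  IsLinearOrder G r ∧ ∀ g x y : G, r x y → r (g * x) (g * y)

/-- A group is left orderable if it admits a left-invariant linear order. -/
def LeftOrderable (G : Type*) [Group G] : Prop :=
  ∃ r : G → G → Prop, IsLeftOrder r

/-- The subgroup `K` is convex with respect to the order `r` on `G`. -/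
def IsConvexWrt {G : Type*} [Group G] (r : G → G → Prop) (K : Subgroup G) : Prop :=
  ∀ j g k : G, j ∈ K → k ∈ K → r j g → r g k → g ∈ K

/-- A subgroup is left-relatively convex if it is convex with respect to
some left order on the group. -/
def LeftRelConvex {G : Type*} [Group G] (K : Subgroup G) : Prop :=
  ∃ r : G → G → Prop, IsLeftOrder r ∧ IsConvexWrt r K


set_option linter.unusedSectionVars false

section Aux

variable {G X : Type*} [Group G] [LinearOrder X]

/-- The candidate left order: `g ≤ h` iff at every point `a` such that `g` and `h`
agree strictly below `a` (w.r.t. `p`), we have `φ g a ≤ φ h a`. -/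
def ordR (φ : G →* (X ≃o X)) (p : X → X → Prop) (g h : G) : Prop :=
  ∀ a : X, (∀ x, p x a → φ g x = φ h x) → φ g a ≤ φ h a

variable (φ : G →* (X ≃o X)) (p : X → X → Prop)

theorem ordR_refl (g : G) : ordR φ p g g := fun _ _ => le_refl _

theorem ordR_total [IsTrichotomous X p] (g h : G) : ordR φ p g h ∨ ordR φ p h g := by
  by_cases hgh : ordR φ p g h
  · exact Or.inl hgh
  · right
    simp only [ordR, not_forall, not_le] at hgh
    obtain ⟨a, hag, hlt⟩ := hgh
    intro b hb
    rcases trichotomous_of p a b with h1 | rfl | h1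
    · exact absurd ((hb a h1).symm) (ne_of_gt hlt)
    · exact le_of_lt hlt
    · exact le_of_eq (hag b h1).symm

theorem ordR_trans [IsTrans X p] (hwf : WellFounded p) {g h k : G}
    (hgh : ordR φ p g h) (hhk : ordR φ p h k) : ordR φ p g k := by
  intro a ha
  by_cases hall : ∀ x, p x a → φ g x = φ h x ∧ φ h x = φ k x
  · exact le_trans (hgh a fun x hx => (hall x hx).1) (hhk a fun x hx => (hall x hx).2)
  · exfalso
    push_neg at hall
    obtain ⟨x₀, hx₀, hx₀'⟩ := hall
    obtain ⟨b, hb, hmin⟩ := hwf.has_min {x | p x a ∧ ¬(φ g x = φ h x ∧ φ h x = φ k x)}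
      ⟨x₀, hx₀, fun hc => hx₀' hc.1 hc.2⟩
    obtain ⟨hba, hbne⟩ := hb
    have hbelow : ∀ x, p x b → φ g x = φ h x ∧ φ h x = φ k x := by
      intro x hx
      by_contra hcon
      exact hmin x ⟨Trans.trans hx hba, hcon⟩ hx
    have h1 : φ g b ≤ φ h b := hgh b fun x hx => (hbelow x hx).1
    have h2 : φ h b ≤ φ k b := hhk b fun x hx => (hbelow x hx).2
    have h3 : φ g b = φ k b := ha b hba
    have e1 : φ g b = φ h b := le_antisymm h1 (h2.trans (le_of_eq h3.symm))
    exact hbne ⟨e1, le_antisymm h2 (le_of_eq h3.symm |>.trans h1)⟩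

theorem ordR_antisymm (hφ : Function.Injective φ) (hwf : WellFounded p) {g h : G}
    (h1 : ordR φ p g h) (h2 : ordR φ p h g) : g = h := by
  by_contra hne
  have hex : ∃ x, φ g x ≠ φ h x := by
    by_contra hall
    push_neg at hall
    exact hne (hφ (by ext x; exact hall x))
  obtain ⟨a, ha, hmin⟩ := hwf.has_min {x | φ g x ≠ φ h x} hex
  have hbelow : ∀ x, p x a → φ g x = φ h x := by
    intro x hx
    by_contra hcon
    exact hmin x hcon hx
  exact ha (le_antisymm (h1 a hbelow) (h2 a fun x hx => (hbelow x hx).symm))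

theorem ordR_mul {g h : G} (k : G) (h1 : ordR φ p g h) : ordR φ p (k * g) (k * h) := by
  intro a ha
  have e : ∀ x, φ (k * g) x = φ k (φ g x) := by intro x; rw [map_mul]; rfl
  have e' : ∀ x, φ (k * h) x = φ k (φ h x) := by intro x; rw [map_mul]; rfl
  have key : ∀ x, p x a → φ g x = φ h x := by
    intro x hx
    have := ha x hx
    rw [e, e'] at this
    exact (φ k).injective this
  rw [e, e']
  exact (φ k).le_iff_le.mpr (h1 a key)

theorem ordR_isLeftOrder [IsTrichotomous X p] [IsTrans X p] (hwf : WellFounded p)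
    (hφ : Function.Injective φ) : IsLeftOrder (ordR φ p) := by
  refine ⟨?_, fun k g h => ordR_mul φ p k⟩
  exact { refl := ordR_refl φ p
          trans := fun a b c => ordR_trans φ p hwf
          antisymm := fun a b => ordR_antisymm φ p hφ hwf
          total := ordR_total φ p }

end Aux

section Aux2

variable {G X : Type*} [Group G] [LinearOrder X]

/-- Well-ordering of `X` with the elements of `Y` placed first. -/
def modRel (Y : Set X) (x y : X) : Prop :=
  (x ∈ Y ∧ y ∉ Y) ∨ ((x ∈ Y ↔ y ∈ Y) ∧ WellOrderingRel x y)

theorem modRel_trichotomous (Y : Set X) : IsTrichotomous X (modRel Y) := by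
  refine Std.trichotomous_of_rel_or_eq_or_rel_swap fun {a b} => ?_
  rcases trichotomous_of WellOrderingRel a b with h | rfl | h
  · by_cases ha : a ∈ Y <;> by_cases hb : b ∈ Y
    · exact Or.inl (Or.inr ⟨by simp [ha, hb], h⟩)
    · exact Or.inl (Or.inl ⟨ha, hb⟩)
    · exact Or.inr (Or.inr (Or.inl ⟨hb, ha⟩))
    · exact Or.inl (Or.inr ⟨by simp [ha, hb], h⟩)
  · exact Or.inr (Or.inl rfl)
  · by_cases ha : a ∈ Y <;> by_cases hb : b ∈ Y
    · exact Or.inr (Or.inr (Or.inr ⟨by simp [ha, hb], h⟩))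
    · exact Or.inl (Or.inl ⟨ha, hb⟩)
    · exact Or.inr (Or.inr (Or.inl ⟨hb, ha⟩))
    · exact Or.inr (Or.inr (Or.inr ⟨by simp [ha, hb], h⟩))

theorem modRel_transAux (Y : Set X) : IsTrans X (modRel Y) := by
  constructor
  rintro a b c (⟨ha, hb⟩ | ⟨hab, h1⟩) (⟨hb', hc⟩ | ⟨hbc, h2⟩)
  · exact absurd hb' hb
  · exact Or.inl ⟨ha, fun hc => hb (hbc.mpr hc)⟩
  · exact Or.inl ⟨hab.mpr hb', hc⟩
  · exact Or.inr ⟨hab.trans hbc, trans_of WellOrderingRel h1 h2⟩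

theorem modRel_wf (Y : Set X) : WellFounded (modRel Y) := by
  classical
  have hwf : WellFounded (Prod.Lex (· < · : ℕ → ℕ → Prop) (WellOrderingRel : X → X → Prop)) :=
    WellFounded.prod_lex (wellFounded_lt) (WellOrderingRel.isWellOrder.wf)
  have : Subrelation (modRel Y)
      (InvImage (Prod.Lex (· < · : ℕ → ℕ → Prop) WellOrderingRel)
        (fun x => ((if x ∈ Y then 0 else 1 : ℕ), x))) := by
    rintro a b (⟨ha, hb⟩ | ⟨hab, h⟩)
    · simp only [InvImage, if_pos ha, if_neg hb]
      exact Prod.Lex.left _ _ (by norm_num)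
    · by_cases ha : a ∈ Y
      · simp only [InvImage, if_pos ha, if_pos (hab.mp ha)]
        exact Prod.Lex.right _ h
      · simp only [InvImage, if_neg ha, if_neg (fun hb => ha (hab.mpr hb))]
        exact Prod.Lex.right _ h

  exact Subrelation.wf this (InvImage.wf _ hwf)

/-- The pointwise stabilizer of `Y` as a subgroup. -/
def stabSub (φ : G →* (X ≃o X)) (Y : Set X) : Subgroup G where
  carrier := {g | ∀ y ∈ Y, φ g y = y}
  one_mem' := fun y _ => by simp
  mul_mem' := fun {a b} ha hb y hy => by
    have : φ (a * b) y = φ a (φ b y) := by rw [map_mul]; rfl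
    rw [this, hb y hy, ha y hy]
  inv_mem' := fun {a} ha y hy => by
    have h := ha y hy
    have : φ a⁻¹ (φ a y) = y := by
      have : φ a⁻¹ (φ a y) = φ (a⁻¹ * a) y := by rw [map_mul]; rfl
      rw [this, inv_mul_cancel, map_one]; rfl
    conv_lhs => rw [← h]
    exact this

theorem stabSub_convex (φ : G →* (X ≃o X)) (Y : Set X) :
    IsConvexWrt (ordR φ (modRel Y)) (stabSub φ Y) := by
  intro j g k hj hk hjg hgk
  by_contra hg
  change ¬ (∀ y ∈ Y, φ g y = y) at hg
  simp only [stabSub, Subgroup.mem_mk, Set.mem_setOf_eq, not_forall] at hg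
  obtain ⟨y, hy, hgy⟩ := hg
  obtain ⟨a, ⟨haY, hag⟩, hmin⟩ := (modRel_wf Y).has_min {x | x ∈ Y ∧ φ g x ≠ x} ⟨y, hy, hgy⟩
  have key : ∀ x, modRel Y x a → x ∈ Y ∧ φ g x = x := by
    intro x hx
    have hxY : x ∈ Y := by
      rcases hx with ⟨h1, _⟩ | ⟨h1, _⟩
      · exact h1
      · exact h1.mpr haY
    refine ⟨hxY, ?_⟩
    by_contra hcon
    exact hmin x ⟨hxY, hcon⟩ hx
  have h1 : φ j a ≤ φ g a := hjg a fun x hx => by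
    rw [hj x (key x hx).1, (key x hx).2]
  have h2 : φ g a ≤ φ k a := hgk a fun x hx => by
    rw [hk x (key x hx).1, (key x hx).2]
  rw [hj a haY] at h1
  rw [hk a haY] at h2
  exact hag (le_antisymm h2 h1)

end Aux2

theorem leftOrderable_of_faithful_order_action {G X : Type*} [Group G]
    [LinearOrder X] (φ : G →* (X ≃o X)) (hφ : Function.Injective φ) :
    LeftOrderable G ∧
      ∀ Y₀ : Set X, ∃ S : Subgroup G,
        (S : Set G) = {g : G | ∀ y ∈ Y₀, φ g y = y} ∧ LeftRelConvex S := by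
  constructor
  · exact ⟨ordR φ WellOrderingRel,
      ordR_isLeftOrder φ WellOrderingRel WellOrderingRel.isWellOrder.wf hφ⟩
  · intro Y₀
    refine ⟨stabSub φ Y₀, rfl, ordR φ (modRel Y₀), ?_, stabSub_convex φ Y₀⟩
    have := modRel_trichotomous (X := X) Y₀
    have := modRel_transAux (X := X) Y₀
    exact ordR_isLeftOrder φ (modRel Y₀) (modRel_wf Y₀) hφ
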